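/- Let k be an algebraically closed field of characteristic zero, let n ≥ 2, d ≥ 1, and let m_1,…,m_{n+2} be integers with 0 ≤ m_i ≤ d+1 for all i. Consider the n+2 points of ℙ^n(k) given by the coordinate points e_1,…,e_{n+1} together with u = [1 : 1 : ⋯ : 1] (a configuration of n+2 points in general position). Set b := Σ_{i=1}^{n+2} m_i − nd and assume that either b = 1, or b ≤ 0 and m_j = d+1 for some j. Then: (i) the only homogeneous polynomial of degree d having multiplicity at least m_i at each of these n+2 points is the zero polynomial; and (ii) ℓ(n,d; m_1,…,m_{n+2}) = 0. (This is the h^0(D) = ldim(D) = 0 part of the theorem on non-effective divisors with s = n+2 points in the chambers b = 1, or b ≤ 0 with some multiplicity d+1.) -/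

import Mathlib

open MvPolynomial Finset

noncomputable section

/-- The homogeneous vanishing ideal of the point of `ℙ^{N-1}` represented by the
vector `v`: the ideal generated by the linear forms vanishing at `v`. -/
def pointIdeal (k : Type) [Field k] (N : ℕ) (v : Fin N → k) :
    Ideal (MvPolynomial (Fin N) k) :=
  Ideal.span {P | P ∈ homogeneousSubmodule (Fin N) k 1 ∧ eval v P = 0}

/-- The homogeneous vanishing ideal `(x_j : j ≠ i)` of the `i`-th coordinate point. -/
def coordIdeal (k : Type) [Field k] (N : ℕ) (i : ℕ) :
    Ideal (MvPolynomial (Fin N) k) :=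
  Ideal.span {P | ∃ j : Fin N, (j : ℕ) ≠ i ∧ P = X j}

/-- The linear system `L_{n,d}(m_1,…,m_s; p_1,…,p_s)` of degree-`d` forms in `n+1`
variables with multiplicity at least `m i` at the point `p i`, for `i < s`. -/
def linSys (k : Type) [Field k] (n d s : ℕ) (m : ℕ → ℕ)
    (p : ℕ → (Fin (n + 1) → k)) : Submodule k (MvPolynomial (Fin (n + 1)) k) :=
  (homogeneousSubmodule (Fin (n + 1)) k d) ⊓
    ⨅ i ∈ Finset.range s,
      Submodule.restrictScalars k (pointIdeal k (n + 1) (p i) ^ (m i))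

/-- The generic dimension of `L_{n,d}(m_1,…,m_s)`: the minimum over all `s`-tuples of
points of `ℙ^n(k)` of the dimension of the corresponding linear system. -/
def gdim (k : Type) [Field k] (n d s : ℕ) (m : ℕ → ℕ) : ℕ :=
  sInf {N | ∃ p : ℕ → (Fin (n + 1) → k),
    (∀ i < s, p i ≠ 0) ∧ N = Module.finrank k ↥(linSys k n d s m p)}

/-- `k_I = max(Σ_{i∈I} m_i − (|I|−1)d, 0)`. -/
def kIdx (d : ℕ) (m : ℕ → ℕ) (I : Finset ℕ) : ℤ :=
  max ((∑ i ∈ I, (m i : ℤ)) - ((I.card : ℤ) - 1) * d) 0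

/-- `binom(a, n)`, understood to be `0` whenever `a < n` (in particular for negative `a`). -/
def binomZ (a : ℤ) (n : ℕ) : ℤ :=
  if a < (n : ℤ) then 0 else ((a.toNat).choose n : ℤ)

/-- The (affine) linear virtual dimension
`ℓ(n,d;m_1,…,m_s) = Σ_{I ⊆ {1,…,s}} (−1)^{|I|} binom(n + k_I − |I|, n)`. -/
def ldim (n d s : ℕ) (m : ℕ → ℕ) : ℤ :=
  ∑ I ∈ (Finset.range s).powerset,
    (-1) ^ I.card * binomZ ((n : ℤ) + kIdx d m I - (I.card : ℤ)) n

/-- The `n+2` points of `ℙ^n` in general position: the coordinate points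
`e_1,…,e_{n+1}` together with the all-ones point `u`. -/
def genCfg (k : Type) [Field k] (n : ℕ) : ℕ → (Fin (n + 1) → k) :=
  fun i j => if i = n + 1 then 1 else if (j : ℕ) = i then 1 else 0

/-- stars and bars -/
theorem card_adT : ∀ (kk r : ℕ), (Finset.Nat.antidiagonalTuple (kk+1) r).card = (r + kk).choose kk := by
  intro kk
  induction kk with
  | zero =>
    intro r
    have h1 : Finset.Nat.antidiagonalTuple 1 r = {fun _ : Fin 1 => r} := by
      ext x
      simp only [Finset.Nat.mem_antidiagonalTuple, Fin.sum_univ_one, mem_singleton]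
      constructor
      · intro h; funext i; have : i = 0 := Subsingleton.elim _ _; rw [this]; exact h
      · intro h; rw [h]
    rw [h1]; simp
  | succ kk ih =>
    intro r
    have hpart : Finset.Nat.antidiagonalTuple (kk+2) r
        = (range (r+1)).biUnion
            (fun j => (Finset.Nat.antidiagonalTuple (kk+1) (r - j)).image
              (fun x : Fin (kk+1) → ℕ => (Fin.cons j x : Fin (kk+2) → ℕ))) := by
      ext a
      simp only [Finset.Nat.mem_antidiagonalTuple, mem_biUnion, mem_range, mem_image]
      constructor
      · intro h
        rw [Fin.sum_univ_succ] at h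
        refine ⟨a 0, by omega, Fin.tail a, ?_, ?_⟩
        · show ∑ i : Fin (kk+1), Fin.tail a i = r - a 0
          have : ∑ i : Fin (kk+1), Fin.tail a i = ∑ i : Fin (kk+1), a i.succ := rfl
          omega
        · exact Fin.cons_self_tail a
      · rintro ⟨j, hj, x, hx, rfl⟩
        rw [Fin.sum_univ_succ]
        simp only [Fin.cons_zero, Fin.cons_succ]
        omega
    rw [hpart, Finset.card_biUnion]
    · have h2 : ∀ j ∈ range (r+1),
          ((Finset.Nat.antidiagonalTuple (kk+1) (r-j)).image
            (fun x : Fin (kk+1) → ℕ => (Fin.cons j x : Fin (kk+2) → ℕ))).card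
            = ((r-j) + kk).choose kk := by
        intro j hj
        have hinj : Function.Injective (fun x : Fin (kk+1) → ℕ => (Fin.cons j x : Fin (kk+2) → ℕ)) := by
          intro x y hxy
          funext i
          have := congrFun hxy i.succ
          simpa using this
        rw [Finset.card_image_of_injective _ hinj, ih]
      rw [Finset.sum_congr rfl h2]
      have h3 : ∀ j ∈ range (r+1), ((r-j) + kk).choose kk
          = (fun i => (i + kk).choose kk) ((r+1) - 1 - j) := by
        intro j hj
        have h4 : r + 1 - 1 - j = r - j := by omega
        rw [h4]
      have hrefl := Finset.sum_range_reflect (fun i => (i + kk).choose kk) (r+1)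
      rw [Finset.sum_congr rfl h3, hrefl, Nat.sum_range_add_choose r kk]
      rw [← Nat.add_assoc]
    · intro j1 h1 j2 h2 hne
      refine Finset.disjoint_left.mpr ?_
      intro a ha1 ha2
      simp only [mem_image] at ha1 ha2
      obtain ⟨x1, _, rfl⟩ := ha1
      obtain ⟨x2, _, h⟩ := ha2
      apply hne
      have h0 := congrFun h 0
      simp only [Fin.cons_zero] at h0
      exact h0.symm

/-- `cntZ K r` = number of `K`-tuples of naturals summing to `r`. -/
def cntZ (K : ℕ) (r : ℤ) : ℤ := if 0 ≤ r then ((Finset.Nat.antidiagonalTuple K r.toNat).card : ℤ) else 0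

theorem cntZ_eq_binomZ (nn : ℕ) (r : ℤ) : cntZ (nn+1) r = binomZ (r + nn) nn := by
  unfold cntZ binomZ
  by_cases h : 0 ≤ r
  · rw [if_pos h, if_neg (by omega)]
    rw [card_adT]
    congr 2
    omega
  · rw [if_neg h, if_pos (by omega)]

theorem cntZ_neg {K : ℕ} {r : ℤ} (h : r < 0) : cntZ K r = 0 := by
  rw [cntZ, if_neg (by omega)]

theorem cnt_shift (K R0 : ℕ) (e : Fin K → ℕ) :
    cntZ K ((R0:ℤ) - ∑ i, (e i : ℤ))
      = (((Finset.Nat.antidiagonalTuple K R0).filter (fun a => ∀ i, e i ≤ a i)).card : ℤ) := by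
  have hsum : ∑ i, (e i : ℤ) = ((∑ i, e i : ℕ) : ℤ) := by push_cast; rfl
  by_cases h : ∑ i, e i ≤ R0
  · rw [cntZ, if_pos (by omega)]
    have ht : ((R0:ℤ) - ∑ i, (e i:ℤ)).toNat = R0 - ∑ i, e i := by omega
    rw [ht]
    norm_cast
    apply Finset.card_bij' (i := fun a _ => (fun i => a i + e i)) (j := fun b _ => (fun i => b i - e i))
    · intro a ha
      rw [Finset.Nat.mem_antidiagonalTuple] at ha
      rw [mem_filter, Finset.Nat.mem_antidiagonalTuple]
      constructor
      · rw [Finset.sum_add_distrib]; omega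
      · intro i; show e i ≤ a i + e i; omega
    · intro b hb
      rw [mem_filter, Finset.Nat.mem_antidiagonalTuple] at hb
      rw [Finset.Nat.mem_antidiagonalTuple]
      obtain ⟨hb1, hb2⟩ := hb
      have : ∑ i, (b i - e i) + ∑ i, e i = ∑ i, b i := by
        rw [← Finset.sum_add_distrib]
        apply Finset.sum_congr rfl
        intro i _
        have := hb2 i
        omega
      omega
    · intro a ha; funext i; show a i + e i - e i = a i; omega
    · intro b hb
      rw [mem_filter] at hb
      funext i
      have := hb.2 i
      show b i - e i + e i = b i
      omega
  · rw [cntZ, if_neg (by omega)]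
    have : (Finset.Nat.antidiagonalTuple K R0).filter (fun a => ∀ i, e i ≤ a i) = ∅ := by
      rw [Finset.filter_eq_empty_iff]
      intro a ha hcon
      rw [Finset.Nat.mem_antidiagonalTuple] at ha
      have : ∑ i, e i ≤ ∑ i, a i := Finset.sum_le_sum (fun i _ => hcon i)
      omega
    rw [this]
    simp

open scoped Classical in
theorem IE (K R0 : ℕ) (e : ℕ → ℕ) :
    ∑ J ∈ (range K).powerset, (-1:ℤ)^J.card * cntZ K ((R0:ℤ) - ∑ j ∈ J, (e j:ℤ))
    = (((Finset.Nat.antidiagonalTuple K R0).filter (fun a : Fin K → ℕ => ∀ i, a i < e ↑i)).card : ℤ) := by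
  have step1 : ∀ J ∈ (range K).powerset,
      (-1:ℤ)^J.card * cntZ K ((R0:ℤ) - ∑ j ∈ J, (e j:ℤ))
      = (-1:ℤ)^J.card * (((Finset.Nat.antidiagonalTuple K R0).filter
          (fun a => ∀ i : Fin K, (if (i:ℕ) ∈ J then e ↑i else 0) ≤ a i)).card : ℤ) := by
    intro J hJ
    have h1 : ∑ j ∈ J, (e j : ℤ) = ∑ i : Fin K, ((if (i:ℕ) ∈ J then e ↑i else 0 : ℕ) : ℤ) := by
      have h2 : ∑ i : Fin K, ((if (i:ℕ) ∈ J then e ↑i else 0 : ℕ) : ℤ)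
          = ∑ j ∈ range K, (if j ∈ J then (e j : ℤ) else 0) := by
        rw [← Fin.sum_univ_eq_sum_range (fun j => if j ∈ J then (e j : ℤ) else 0) K]
        apply Finset.sum_congr rfl
        intro i _
        split <;> simp
      rw [h2, Finset.sum_ite_mem, Finset.inter_eq_right.mpr (mem_powerset.mp hJ)]
    rw [h1, cnt_shift]
  rw [Finset.sum_congr rfl step1]
  have step2 : ∀ J ∈ (range K).powerset,
      (-1:ℤ)^J.card * (((Finset.Nat.antidiagonalTuple K R0).filter
          (fun a => ∀ i : Fin K, (if (i:ℕ) ∈ J then e ↑i else 0) ≤ a i)).card : ℤ)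
      = ∑ a ∈ Finset.Nat.antidiagonalTuple K R0,
          (-1:ℤ)^J.card * (if (∀ i : Fin K, (if (i:ℕ) ∈ J then e ↑i else 0) ≤ a i) then 1 else 0) := by
    intro J _
    rw [← Finset.mul_sum]
    congr 1
    rw [Finset.sum_boole]
  rw [Finset.sum_congr rfl step2, Finset.sum_comm]
  have inner : ∀ a ∈ Finset.Nat.antidiagonalTuple K R0,
      (∑ J ∈ (range K).powerset,
        (-1:ℤ)^J.card * (if (∀ i : Fin K, (if (i:ℕ) ∈ J then e ↑i else 0) ≤ a i) then 1 else 0))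
      = (if (∀ i : Fin K, a i < e ↑i) then 1 else 0) := by
    intro a _
    set B : Finset ℕ := (univ.filter (fun i : Fin K => e ↑i ≤ a i)).image Fin.val with hB
    have hBsub : B ⊆ range K := by
      intro j hj
      rw [hB, mem_image] at hj
      obtain ⟨i, _, rfl⟩ := hj
      exact mem_range.mpr i.isLt
    have hcond : ∀ J ∈ (range K).powerset,
        (∀ i : Fin K, (if (i:ℕ) ∈ J then e ↑i else 0) ≤ a i) ↔ J ⊆ B := by
      intro J hJ
      constructor
      · intro h j hj
        have hjK : j < K := mem_range.mp (mem_powerset.mp hJ hj)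
        refine mem_image.mpr ⟨⟨j, hjK⟩, mem_filter.mpr ⟨mem_univ _, ?_⟩, rfl⟩
        have := h ⟨j, hjK⟩
        simpa [hj] using this
      · intro h i
        by_cases hi : (i:ℕ) ∈ J
        · rw [if_pos hi]
          have := h hi
          rw [hB, mem_image] at this
          obtain ⟨i', hi', hval⟩ := this
          have : i' = i := Fin.val_injective hval
          rw [this] at hi'
          exact (mem_filter.mp hi').2
        · rw [if_neg hi]; exact Nat.zero_le _
    have hrw : ∀ J ∈ (range K).powerset,
        (-1:ℤ)^J.card * (if (∀ i : Fin K, (if (i:ℕ) ∈ J then e ↑i else 0) ≤ a i) then 1 else 0)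
        = (-1:ℤ)^J.card * (if J ⊆ B then 1 else 0) := by
      intro J hJ
      congr 1
      simp only [hcond J hJ]
    rw [Finset.sum_congr rfl hrw]
    have hsub : ∑ J ∈ (range K).powerset, (-1:ℤ)^J.card * (if J ⊆ B then 1 else 0)
        = ∑ J ∈ B.powerset, (-1:ℤ)^J.card := by
      rw [← Finset.sum_subset (Finset.powerset_mono.mpr hBsub)]
      · apply Finset.sum_congr rfl
        intro J hJ
        rw [if_pos (mem_powerset.mp hJ), mul_one]
      · intro J _ hJ
        rw [if_neg (fun hc => hJ (mem_powerset.mpr hc)), mul_zero]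
    rw [hsub, Finset.sum_powerset_neg_one_pow_card]
    have : B = ∅ ↔ ∀ i : Fin K, a i < e ↑i := by
      rw [hB, Finset.image_eq_empty, Finset.filter_eq_empty_iff]
      constructor
      · intro h i; have := h (mem_univ i); omega
      · intro h i _; have := h i; omega
    simp only [this]
  rw [Finset.sum_congr rfl inner, Finset.sum_boole]

theorem binomZ_of_lt {a : ℤ} {n : ℕ} (h : a < n) : binomZ a n = 0 := if_pos h

theorem term_eq (n d : ℕ) (hd : 1 ≤ d) (m : ℕ → ℕ) (hm : ∀ i < n + 2, m i ≤ d + 1)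
    (I : Finset ℕ) (hI : I ∈ (range (n+2)).powerset) :
    binomZ ((n : ℤ) + kIdx d m I - (I.card : ℤ)) n
      = cntZ (n+1) ((d:ℤ) - ∑ i ∈ I, ((d + 1 - m i : ℕ) : ℤ)) := by
  have hIsub := mem_powerset.mp hI
  have hcast : ∀ i ∈ I, ((d + 1 - m i : ℕ) : ℤ) = (d:ℤ) + 1 - (m i : ℤ) := by
    intro i hi
    have : m i ≤ d + 1 := hm i (mem_range.mp (hIsub hi))
    omega
  rw [Finset.sum_congr rfl hcast, cntZ_eq_binomZ]
  have hsplit : ∑ i ∈ I, ((d:ℤ) + 1 - (m i:ℤ))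
      = (I.card : ℤ) * ((d:ℤ)+1) - ∑ i ∈ I, (m i : ℤ) := by
    rw [Finset.sum_sub_distrib, Finset.sum_const, nsmul_eq_mul]
  rw [hsplit, kIdx]
  set S := ∑ i ∈ I, (m i : ℤ) with hS
  set T := (I.card : ℤ) with hT
  by_cases hpos : 0 ≤ S - (T - 1) * d
  · rw [max_eq_left hpos]
    congr 1
    ring
  · rw [max_eq_right (by omega)]
    have hT1 : 1 ≤ T := by
      rcases Nat.eq_zero_or_pos I.card with h0 | h1
      · exfalso
        rw [Finset.card_eq_zero] at h0
        rw [hS, hT, h0] at hpos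
        simp at hpos
      · rw [hT]; exact_mod_cast h1
    rw [binomZ_of_lt (by omega), binomZ_of_lt ?_]
    have h2 : S - (T-1)*d < 0 := by omega
    nlinarith [h2, hT1]

theorem ldim_split (n d : ℕ) (hd : 1 ≤ d) (m : ℕ → ℕ) (hm : ∀ i < n + 2, m i ≤ d + 1) :
    ldim n d (n+2) m
      = (∑ J ∈ (range (n+1)).powerset,
          (-1:ℤ)^J.card * cntZ (n+1) ((d:ℤ) - ∑ j ∈ J, ((d + 1 - m j : ℕ) : ℤ)))
        - (∑ J ∈ (range (n+1)).powerset,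
          (-1:ℤ)^J.card * cntZ (n+1) (((m (n+1) : ℤ) - 1) - ∑ j ∈ J, ((d + 1 - m j : ℕ) : ℤ))) := by
  rw [ldim]
  rw [Finset.sum_congr rfl (fun I hI => by rw [term_eq n d hd m hm I hI])]
  have hr : range (n+2) = insert (n+1) (range (n+1)) := Finset.range_add_one
  rw [hr, Finset.powerset_insert, Finset.sum_union, Finset.sum_image]
  · have himg : ∀ J ∈ (range (n+1)).powerset,
        (-1:ℤ)^(insert (n+1) J).card * cntZ (n+1) ((d:ℤ) - ∑ j ∈ insert (n+1) J, ((d + 1 - m j : ℕ) : ℤ))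
        = -((-1:ℤ)^J.card * cntZ (n+1) (((m (n+1) : ℤ) - 1) - ∑ j ∈ J, ((d + 1 - m j : ℕ) : ℤ))) := by
      intro J hJ
      have hnotmem : (n+1) ∉ J := fun hc => by
        have := mem_range.mp (mem_powerset.mp hJ hc); omega
      rw [Finset.card_insert_of_notMem hnotmem, Finset.sum_insert hnotmem]
      have he : ((d + 1 - m (n+1) : ℕ) : ℤ) = (d:ℤ) + 1 - m (n+1) := by
        have := hm (n+1) (by omega); omega
      rw [he, pow_succ]
      have harg : (d:ℤ) - ((d:ℤ) + 1 - m (n+1) + ∑ j ∈ J, ((d + 1 - m j : ℕ) : ℤ))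
          = ((m (n+1) : ℤ) - 1) - ∑ j ∈ J, ((d + 1 - m j : ℕ) : ℤ) := by ring
      rw [harg]
      ring
    rw [Finset.sum_congr rfl himg, Finset.sum_neg_distrib]
    ring
  · intro x hx y hy hxy
    have hxn : (n+1) ∉ x := fun hc => by
      have := mem_range.mp (mem_powerset.mp hx hc); omega
    have hyn : (n+1) ∉ y := fun hc => by
      have := mem_range.mp (mem_powerset.mp hy hc); omega
    have := congrArg (Finset.erase · (n+1)) hxy
    simpa [Finset.erase_insert hxn, Finset.erase_insert hyn] using this
  · rw [Finset.disjoint_left]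
    intro J hJ hJ'
    rw [mem_image] at hJ'
    obtain ⟨J', _, rfl⟩ := hJ'
    have : (n+1) ∈ insert (n+1) J' := mem_insert_self _ _
    have := mem_range.mp (mem_powerset.mp hJ this)
    omega

open scoped Classical in
theorem filter_empty_of_zero (K R0 : ℕ) (e : ℕ → ℕ) (j : Fin K) (hj : e ↑j = 0) :
    ((Finset.Nat.antidiagonalTuple K R0).filter (fun a : Fin K → ℕ => ∀ i, a i < e ↑i)) = ∅ := by
  rw [Finset.filter_eq_empty_iff]
  intro a _ hcon
  have := hcon j
  omega

open scoped Classical in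
theorem boxdual (n d mτ : ℕ) (hmτ : 1 ≤ mτ) (m : ℕ → ℕ)
    (hmd : ∀ j : Fin (n+1), m ↑j ≤ d)
    (hsum : (∑ j : Fin (n+1), (d - m ↑j)) + 1 = d + mτ) :
    ((Finset.Nat.antidiagonalTuple (n+1) d).filter
        (fun a : Fin (n+1) → ℕ => ∀ i, a i < d + 1 - m ↑i)).card
    = ((Finset.Nat.antidiagonalTuple (n+1) (mτ-1)).filter
        (fun a : Fin (n+1) → ℕ => ∀ i, a i < d + 1 - m ↑i)).card := by
  apply Finset.card_bij' (i := fun a _ => (fun i : Fin (n+1) => d - m ↑i - a i))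
    (j := fun b _ => (fun i : Fin (n+1) => d - m ↑i - b i))
  · intro a ha
    rw [mem_filter, Finset.Nat.mem_antidiagonalTuple] at ha ⊢
    obtain ⟨ha1, ha2⟩ := ha
    constructor
    · have key : ∀ i : Fin (n+1), (d - m ↑i - a i) + a i = d - m ↑i := by
        intro i; have h1 := ha2 i; have h2 := hmd i; omega
      have : ∑ i : Fin (n+1), ((d - m ↑i - a i) + a i) = ∑ i : Fin (n+1), (d - m ↑i) :=
        Finset.sum_congr rfl (fun i _ => key i)
      rw [Finset.sum_add_distrib] at this
      omega
    · intro i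
      have h2 := hmd i
      show d - m ↑i - a i < d + 1 - m ↑i
      omega
  · intro b hb
    rw [mem_filter, Finset.Nat.mem_antidiagonalTuple] at hb ⊢
    obtain ⟨hb1, hb2⟩ := hb
    constructor
    · have key : ∀ i : Fin (n+1), (d - m ↑i - b i) + b i = d - m ↑i := by
        intro i; have h1 := hb2 i; have h2 := hmd i; omega
      have : ∑ i : Fin (n+1), ((d - m ↑i - b i) + b i) = ∑ i : Fin (n+1), (d - m ↑i) :=
        Finset.sum_congr rfl (fun i _ => key i)
      rw [Finset.sum_add_distrib] at this
      omega
    · intro i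
      have h2 := hmd i
      show d - m ↑i - b i < d + 1 - m ↑i
      omega
  · intro a ha
    rw [mem_filter] at ha
    funext i
    have h1 := ha.2 i
    have h2 := hmd i
    show d - m ↑i - (d - m ↑i - a i) = a i
    omega
  · intro b hb
    rw [mem_filter] at hb
    funext i
    have h1 := hb.2 i
    have h2 := hmd i
    show d - m ↑i - (d - m ↑i - b i) = b i
    omega

open scoped Classical in
theorem partii (n d : ℕ) (hn : 2 ≤ n) (hd : 1 ≤ d) (m : ℕ → ℕ)
    (hm : ∀ i < n + 2, m i ≤ d + 1)
    (hb : ((∑ i ∈ Finset.range (n + 2), (m i : ℤ)) - (n : ℤ) * d = 1) ∨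
      (((∑ i ∈ Finset.range (n + 2), (m i : ℤ)) - (n : ℤ) * d ≤ 0) ∧
        ∃ j < n + 2, m j = d + 1)) :
    ldim n d (n+2) m = 0 := by
  rw [ldim_split n d hd m hm, IE (n+1) d (fun j => d + 1 - m j)]
  by_cases hmτ0 : m (n+1) = 0
  · -- second sum vanishes term by term
    have hB : ∀ J ∈ (range (n+1)).powerset,
        (-1:ℤ)^J.card * cntZ (n+1) (((m (n+1) : ℤ) - 1) - ∑ j ∈ J, ((d + 1 - m j : ℕ) : ℤ)) = 0 := by
      intro J _
      rw [cntZ_neg, mul_zero]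
      have : (0:ℤ) ≤ ∑ j ∈ J, ((d + 1 - m j : ℕ) : ℤ) :=
        Finset.sum_nonneg (fun j _ => by positivity)
      omega
    rw [Finset.sum_congr rfl hB, Finset.sum_const_zero, sub_zero]
    -- now show A-filter is empty
    -- we cannot have m j = d+1 for j = n+1 (since m (n+1) = 0 and d ≥ 1)
    rcases hb with hb1 | ⟨hble, j, hjlt, hjval⟩
    · -- b = 1 and mτ = 0 : box too small
      norm_cast
      rw [Finset.card_eq_zero, Finset.filter_eq_empty_iff]
      intro a ha hcon
      rw [Finset.Nat.mem_antidiagonalTuple] at ha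
      -- case: some m j = d + 1 with j < n+1?
      by_cases hex : ∃ j : Fin (n+1), m ↑j = d + 1
      · obtain ⟨j, hj⟩ := hex
        have := hcon j
        omega
      · push_neg at hex
        have hmd : ∀ j : Fin (n+1), m ↑j ≤ d := by
          intro j
          have h1 := hm ↑j (by omega)
          have h2 := hex j
          omega
        -- ∑ a = d but a i ≤ d - m i and ∑ (d - m i) = d - 1
        have hub : ∀ i : Fin (n+1), a i ≤ d - m ↑i := by
          intro i; have := hcon i; have := hmd i; omega
        have hsumle : ∑ i : Fin (n+1), a i ≤ ∑ i : Fin (n+1), (d - m ↑i) :=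
          Finset.sum_le_sum (fun i _ => hub i)
        -- compute ∑ (d - m i) = d - 1 via ℤ
        have hZ : (∑ i : Fin (n+1), ((d - m ↑i : ℕ) : ℤ)) = (d:ℤ) - 1 := by
          have hc : ∀ i : Fin (n+1), ((d - m ↑i : ℕ) : ℤ) = (d:ℤ) - (m ↑i : ℤ) := by
            intro i; have := hmd i; omega
          rw [Finset.sum_congr rfl (fun i _ => hc i), Finset.sum_sub_distrib,
            Finset.sum_const, Finset.card_univ, Fintype.card_fin, nsmul_eq_mul]
          have hfin : ∑ i : Fin (n+1), (m ↑i : ℤ) = ∑ i ∈ range (n+1), (m i : ℤ) :=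
            Fin.sum_univ_eq_sum_range (fun i => (m i : ℤ)) (n+1)
          rw [hfin]
          rw [Finset.sum_range_succ] at hb1
          rw [hmτ0] at hb1
          push_cast at hb1 ⊢
          linarith
        have : ((∑ i : Fin (n+1), (d - m ↑i) : ℕ) : ℤ) = (d:ℤ) - 1 := by
          rw [Nat.cast_sum]
          exact hZ
        omega
    · -- b ≤ 0 and some m j = d+1; j must be < n+1 since m (n+1) = 0
      have hjn : j < n + 1 := by
        rcases Nat.lt_or_ge j (n+1) with h | h
        · exact h
        · exfalso; have : j = n+1 := by omega
          rw [this, hmτ0] at hjval; omega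
      norm_cast
      rw [filter_empty_of_zero (n+1) d (fun j => d + 1 - m j) ⟨j, hjn⟩ (by simp [hjval])]
      simp
  · -- mτ ≥ 1
    have hrw : ∀ J ∈ (range (n+1)).powerset,
        (-1:ℤ)^J.card * cntZ (n+1) (((m (n+1) : ℤ) - 1) - ∑ j ∈ J, ((d + 1 - m j : ℕ) : ℤ))
        = (-1:ℤ)^J.card * cntZ (n+1) (((m (n+1) - 1 : ℕ) : ℤ) - ∑ j ∈ J, ((d + 1 - m j : ℕ) : ℤ)) := by
      intro J _
      congr 2
      omega
    rw [Finset.sum_congr rfl hrw, IE (n+1) (m (n+1) - 1) (fun j => d + 1 - m j)]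
    rw [sub_eq_zero]
    norm_cast
    by_cases hex : ∃ j : Fin (n+1), m ↑j = d + 1
    · obtain ⟨j, hj⟩ := hex
      rw [filter_empty_of_zero (n+1) d (fun j => d + 1 - m j) j (by simp [hj]),
        filter_empty_of_zero (n+1) (m (n+1) - 1) (fun j => d + 1 - m j) j (by simp [hj])]
    · push_neg at hex
      have hmd : ∀ j : Fin (n+1), m ↑j ≤ d := by
        intro j
        have h1 := hm ↑j (by omega)
        have h2 := hex j
        omega
      by_cases hT2 : m (n+1) = d + 1
      · rw [hT2, Nat.add_sub_cancel]
      · -- all m i ≤ d, so hb must be the b = 1 case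
        rcases hb with hb1 | ⟨hble, j, hjlt, hjval⟩
        · -- bijection
          have hsum : (∑ j : Fin (n+1), (d - m ↑j)) + 1 = d + m (n+1) := by
            have hZ : (∑ i : Fin (n+1), ((d - m ↑i : ℕ) : ℤ)) = (d:ℤ) + m (n+1) - 1 := by
              have hc : ∀ i : Fin (n+1), ((d - m ↑i : ℕ) : ℤ) = (d:ℤ) - (m ↑i : ℤ) := by
                intro i; have := hmd i; omega
              rw [Finset.sum_congr rfl (fun i _ => hc i), Finset.sum_sub_distrib,
                Finset.sum_const, Finset.card_univ, Fintype.card_fin, nsmul_eq_mul]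
              have hfin : ∑ i : Fin (n+1), (m ↑i : ℤ) = ∑ i ∈ range (n+1), (m i : ℤ) :=
                Fin.sum_univ_eq_sum_range (fun i => (m i : ℤ)) (n+1)
              rw [hfin]
              rw [Finset.sum_range_succ] at hb1
              push_cast at hb1 ⊢
              linarith
            have : ((∑ i : Fin (n+1), (d - m ↑i) : ℕ) : ℤ) = (d:ℤ) + m (n+1) - 1 := by
              rw [Nat.cast_sum]; exact hZ
            omega
          exact boxdual n d (m (n+1)) (by omega) m hmd hsum
        · -- some m j = d + 1, but all m i ≤ d (i ≤ n) and m (n+1) ≠ d+1: contradiction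
          exfalso
          rcases Nat.lt_or_ge j (n+1) with h | h
          · have := hmd ⟨j, h⟩; simp at this; omega
          · have : j = n + 1 := by omega
            rw [this] at hjval; exact hT2 hjval

variable {k : Type} [Field k] {N : ℕ}

theorem sum_eq_of_isHomogeneous {F : MvPolynomial (Fin N) k} {d : ℕ}
    (h : F.IsHomogeneous d) {b : Fin N →₀ ℕ} (hb : coeff b F ≠ 0) : ∑ j, b j = d := by
  have := h hb
  simpa [Finsupp.weight, Finsupp.degree, Finsupp.linearCombination, Finsupp.sum_fintype] using this

/-- general weight bound on powers of an ideal generated by weight-≥1 elements -/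
theorem weight_pow (w : (Fin N →₀ ℕ) → ℕ)
    (hw : ∀ a b, w (a + b) = w a + w b)
    (S : Set (MvPolynomial (Fin N) k))
    (hS : ∀ s ∈ S, ∀ b, coeff b s ≠ 0 → 1 ≤ w b) :
    ∀ t, ∀ f ∈ (Ideal.span S) ^ t, ∀ b, coeff b f ≠ 0 → t ≤ w b := by
  intro t
  induction t with
  | zero => intro f _ b _; exact Nat.zero_le _
  | succ t ih =>
    intro f hf
    rw [pow_succ] at hf
    have inner : ∀ p ∈ Ideal.span S, ∀ g : MvPolynomial (Fin N) k,
        (∀ b, coeff b g ≠ 0 → t ≤ w b) → ∀ b, coeff b (g * p) ≠ 0 → t + 1 ≤ w b := by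
      intro p hp
      induction hp using Submodule.span_induction with
      | mem x hx =>
        intro g hg b hb
        rw [coeff_mul] at hb
        obtain ⟨⟨x1, x2⟩, hmem, hne⟩ := Finset.exists_ne_zero_of_sum_ne_zero hb
        have hx1 : coeff x1 g ≠ 0 := left_ne_zero_of_mul hne
        have hx2 : coeff x2 x ≠ 0 := right_ne_zero_of_mul hne
        have hadd : x1 + x2 = b := Finset.HasAntidiagonal.mem_antidiagonal.mp hmem
        have h1 := hg x1 hx1
        have h2 := hS x hx x2 hx2
        have := hw x1 x2
        rw [hadd] at this
        omega
      | zero =>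
        intro g hg b hb
        simp at hb
      | add x y hx hy ihx ihy =>
        intro g hg b hb
        rw [mul_add] at hb
        rcases (by
          by_contra hc
          push_neg at hc
          rw [coeff_add, hc.1, hc.2, add_zero] at hb
          exact hb rfl : coeff b (g * x) ≠ 0 ∨ coeff b (g * y) ≠ 0) with h | h
        · exact ihx g hg b h
        · exact ihy g hg b h
      | smul a x hx ihx =>
        intro g hg b hb
        have heq : g * (a • x) = (g * a) * x := by
          rw [smul_eq_mul]; ring
        rw [heq] at hb
        refine ihx (g * a) ?_ b hb
        intro b' hb'
        rw [coeff_mul] at hb'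
        obtain ⟨⟨x1, x2⟩, hmem, hne⟩ := Finset.exists_ne_zero_of_sum_ne_zero hb'
        have hx1 : coeff x1 g ≠ 0 := left_ne_zero_of_mul hne
        have hadd : x1 + x2 = b' := Finset.HasAntidiagonal.mem_antidiagonal.mp hmem
        have h1 := hg x1 hx1
        have := hw x1 x2
        rw [hadd] at this
        omega
    refine Submodule.mul_induction_on hf ?_ ?_
    · intro g hg p hp
      exact inner p hp g (ih g hg)
    · intro x y hx hy b hb
      rcases (by
        by_contra hc
        push_neg at hc
        rw [coeff_add, hc.1, hc.2, add_zero] at hb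
        exact hb rfl : coeff b x ≠ 0 ∨ coeff b y ≠ 0) with h | h
      · exact hx b h
      · exact hy b h

/-- degree bound: elements of the `t`-th power of a point ideal have all monomials
of total degree at least `t` -/
theorem pointIdeal_pow_totalDeg (v : Fin N → k) (t : ℕ) (F : MvPolynomial (Fin N) k)
    (hF : F ∈ pointIdeal k N v ^ t) (b : Fin N →₀ ℕ) (hb : coeff b F ≠ 0) :
    t ≤ ∑ j, b j := by
  refine weight_pow (fun b => ∑ j, b j) (by intro a b; simp [Finsupp.add_apply, Finset.sum_add_distrib]) _ ?_ t F hF b hb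
  rintro s ⟨hs1, hs2⟩ b' hb'
  have := sum_eq_of_isHomogeneous ((mem_homogeneousSubmodule 1 s).mp hs1) hb'
  show 1 ≤ ∑ j, b' j
  omega

/-- a homogeneous polynomial of degree `d` lying in the `(d+1)`-st power of a point
ideal is zero -/
theorem homog_zero_of_mem_pow (v : Fin N → k) (d : ℕ) (F : MvPolynomial (Fin N) k)
    (hF : F.IsHomogeneous d) (h : F ∈ pointIdeal k N v ^ (d+1)) : F = 0 := by
  ext b
  rw [coeff_zero]
  by_contra hb
  have h1 := pointIdeal_pow_totalDeg v (d+1) F h b hb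
  have h2 := sum_eq_of_isHomogeneous hF hb
  omega

theorem single_of_sum_eq_one {b : Fin N →₀ ℕ} (h : ∑ j, b j = 1) :
    ∃ j, b = Finsupp.single j 1 := by
  obtain ⟨j, hj⟩ : ∃ j, b j ≠ 0 := by
    by_contra hc
    push_neg at hc
    simp [hc] at h
  refine ⟨j, ?_⟩
  have hsplit : b j + ∑ l ∈ univ.erase j, b l = ∑ l, b l :=
    Finset.add_sum_erase _ _ (mem_univ j)
  ext l
  by_cases hl : l = j
  · subst hl
    rw [Finsupp.single_eq_same]
    omega
  · rw [Finsupp.single_eq_of_ne' (Ne.symm hl)]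
    have hmem : l ∈ univ.erase j := Finset.mem_erase.mpr ⟨hl, mem_univ l⟩
    have hzero : ∑ l ∈ univ.erase j, b l = 0 := by omega
    exact (Finset.sum_eq_zero_iff.mp hzero) l hmem

/-- evaluation of a homogeneous linear polynomial at a coordinate point -/
theorem eval_coord_linear (i0 : Fin N) (s : MvPolynomial (Fin N) k)
    (hs : s.IsHomogeneous 1) :
    eval (fun j => if j = i0 then (1:k) else 0) s = coeff (Finsupp.single i0 1) s := by
  rw [eval_eq]
  rw [Finset.sum_eq_single (Finsupp.single i0 1)]
  · by_cases h : Finsupp.single i0 1 ∈ s.support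
    · rw [Finsupp.support_single_ne_zero i0 one_ne_zero]
      rw [Finset.prod_singleton, Finsupp.single_eq_same, if_pos rfl, one_pow, mul_one]
    · rw [notMem_support_iff.mp h]
      ring
  · intro b hb hne
    obtain ⟨j', hj'⟩ := single_of_sum_eq_one
      (sum_eq_of_isHomogeneous hs (mem_support_iff.mp hb))
    have hji : j' ≠ i0 := by
      intro hc; rw [hc] at hj'; exact hne (hj' ▸ rfl)
    subst hj'
    rw [Finsupp.support_single_ne_zero j' one_ne_zero, Finset.prod_singleton,
      Finsupp.single_eq_same, if_neg hji]
    ring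
  · intro h
    rw [notMem_support_iff.mp h]
    ring

/-- weight bound at a coordinate point: for `F` in the `t`-th power of the ideal of the
`i0`-th coordinate point, each monomial has off-`i0` degree at least `t`. -/
theorem pointIdeal_coord_weight (i0 : Fin N) (t : ℕ) (F : MvPolynomial (Fin N) k)
    (hF : F ∈ pointIdeal k N (fun j => if j = i0 then (1:k) else 0) ^ t)
    (b : Fin N →₀ ℕ) (hb : coeff b F ≠ 0) :
    t ≤ ∑ j, (if j = i0 then 0 else b j) := by
  refine weight_pow (fun b => ∑ j, (if j = i0 then 0 else b j)) ?_ _ ?_ t F hF b hb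
  · intro a b
    rw [← Finset.sum_add_distrib]
    apply Finset.sum_congr rfl
    intro j _
    by_cases h : j = i0 <;> simp [h]
  · rintro s ⟨hs1, hs2⟩ b' hb'
    have hhom := (mem_homogeneousSubmodule 1 s).mp hs1
    obtain ⟨j', hj'⟩ := single_of_sum_eq_one (sum_eq_of_isHomogeneous hhom hb')
    show 1 ≤ ∑ j, (if j = i0 then 0 else b' j)
    have hji : j' ≠ i0 := by
      intro hc
      rw [eval_coord_linear i0 s hhom] at hs2
      rw [hc] at hj'
      rw [hj'] at hb'
      exact hb' hs2
    subst hj'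
    rw [Finset.sum_eq_single j']
    · rw [if_neg hji, Finsupp.single_eq_same]
    · intro l _ hl
      by_cases h : l = i0
      · rw [if_pos h]
      · rw [if_neg h, Finsupp.single_eq_of_ne' (Ne.symm hl)]
    · intro h; exact absurd (mem_univ j') h

theorem pderiv_mem_pow (I : Ideal (MvPolynomial (Fin N) k)) (i : Fin N) :
    ∀ t : ℕ, ∀ f ∈ I ^ (t+1), (pderiv i) f ∈ I ^ t := by
  intro t
  induction t with
  | zero => intro f _; simp
  | succ t ih =>
    intro f hf
    rw [pow_succ] at hf
    refine Submodule.mul_induction_on hf ?_ ?_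
    · intro g hg p hp
      rw [pderiv_mul]
      refine Submodule.add_mem _ ?_ ?_
      · rw [pow_succ]
        exact Ideal.mul_mem_mul (ih g hg) hp
      · exact Ideal.mul_mem_right _ _ hg
    · intro x y hx hy
      rw [map_add]
      exact Submodule.add_mem _ hx hy

theorem theta_mem_pow (I : Ideal (MvPolynomial (Fin N) k)) (i : Fin N)
    (t : ℕ) (f : MvPolynomial (Fin N) k) (hf : f ∈ I ^ (t+1)) :
    X i * (pderiv i) f ∈ I ^ t :=
  Ideal.mul_mem_left _ _ (pderiv_mem_pow I i t f hf)

theorem coeff_theta (i : Fin N) (f : MvPolynomial (Fin N) k) (b : Fin N →₀ ℕ) :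
    coeff b (X i * (pderiv i) f) = (b i : k) * coeff b f := by
  induction f using MvPolynomial.induction_on' with
  | add p q hp hq =>
    rw [map_add, mul_add, coeff_add, coeff_add, hp, hq, mul_add]
  | monomial s a =>
    rw [pderiv_monomial]
    by_cases hsi : s i = 0
    · have h0 : (monomial (s - Finsupp.single i 1)) (a * (s i : k)) = 0 := by
        rw [hsi]
        push_cast
        rw [mul_zero, monomial_zero]
      rw [h0, mul_zero, coeff_zero, coeff_monomial]
      split
      · next h => subst h; rw [hsi]; simp
      · rw [mul_zero]
    · have hle : Finsupp.single i 1 ≤ s := Finsupp.single_le_iff.mpr (by omega)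
      have hX : X i * (monomial (s - Finsupp.single i 1)) (a * (s i : k))
          = monomial s (a * (s i : k)) := by
        rw [← pow_one (X i), ← monomial_single_add, add_tsub_cancel_of_le hle]
      rw [hX, coeff_monomial, coeff_monomial]
      split
      · next h => subst h; ring
      · rw [mul_zero]

/-- the discrete moment functional -/
def Smon (β : Fin N → ℕ) (f : MvPolynomial (Fin N) k) : k :=
  ∑ b ∈ f.support, coeff b f * ∏ j, (b j : k) ^ β j

theorem Smon_zero_exp (f : MvPolynomial (Fin N) k) :
    Smon (fun _ => 0) f = eval (fun _ => (1:k)) f := by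
  rw [Smon, eval_eq]
  apply Finset.sum_congr rfl
  intro b _
  simp

theorem Smon_step (i : Fin N) (β : Fin N → ℕ) (f : MvPolynomial (Fin N) k) :
    Smon (fun j => β j + (if j = i then 1 else 0)) f
      = Smon β (X i * (pderiv i) f) := by
  have hsub : (X i * (pderiv i) f).support ⊆ f.support := by
    intro b hb
    rw [mem_support_iff] at hb ⊢
    intro hc
    rw [coeff_theta, hc, mul_zero] at hb
    exact hb rfl
  have h1 : Smon β (X i * (pderiv i) f)
      = ∑ b ∈ f.support, coeff b (X i * (pderiv i) f) * ∏ j, (b j : k) ^ β j :=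
    Finset.sum_subset hsub (by
      intro b _ hbn
      rw [notMem_support_iff.mp hbn, zero_mul])
  rw [Smon, h1]
  apply Finset.sum_congr rfl
  intro b _
  rw [coeff_theta]
  have hsplit : ∏ j, (b j : k) ^ (β j + (if j = i then 1 else 0))
      = (b i : k) * ∏ j, (b j : k) ^ β j := by
    rw [Finset.prod_congr rfl (fun j _ => pow_add (b j : k) (β j) _),
      Finset.prod_mul_distrib]
    have hpow : ∀ j : Fin N, (b j : k) ^ (if j = i then 1 else 0)
        = if j = i then (b j : k) else 1 := by
      intro j; split <;> simp
    rw [Finset.prod_congr rfl (fun j _ => hpow j), Finset.prod_ite_eq' univ i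
      (fun j => (b j : k)), if_pos (mem_univ i)]
    ring
  rw [hsplit]
  ring

theorem eval_one_mem (f : MvPolynomial (Fin N) k)
    (hf : f ∈ pointIdeal k N (fun _ => 1)) : eval (fun _ => (1:k)) f = 0 := by
  have hle : pointIdeal k N (fun _ => 1) ≤ RingHom.ker (eval (fun _ => (1:k))) := by
    rw [pointIdeal, Ideal.span_le]
    rintro s ⟨_, hs2⟩
    exact hs2
  exact hle hf

theorem Smon_vanish : ∀ (t : ℕ) (β : Fin N → ℕ), (∑ j, β j) = t →
    ∀ (mm : ℕ) (f : MvPolynomial (Fin N) k),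
      f ∈ pointIdeal k N (fun _ => 1) ^ mm → t < mm → Smon β f = 0 := by
  intro t
  induction t with
  | zero =>
    intro β hβ mm f hf hlt
    have hβ0 : β = fun _ => 0 := by
      funext j
      exact Finset.sum_eq_zero_iff.mp hβ j (mem_univ j)
    rw [hβ0, Smon_zero_exp]
    exact eval_one_mem f (Ideal.pow_le_self (by omega) hf)
  | succ t ih =>
    intro β hβ mm f hf hlt
    obtain ⟨i, hi⟩ : ∃ i, β i ≠ 0 := by
      by_contra hc
      push_neg at hc
      rw [Finset.sum_eq_zero (fun j _ => hc j)] at hβ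
      omega
    obtain ⟨mm', rfl⟩ : ∃ mm', mm = mm' + 1 := ⟨mm - 1, by omega⟩
    set β' : Fin N → ℕ := fun j => β j - (if j = i then 1 else 0) with hβ'
    have hββ' : β = fun j => β' j + (if j = i then 1 else 0) := by
      funext j
      by_cases h : j = i <;> simp [hβ', h]
      omega
    have hsum' : ∑ j, β' j = t := by
      have h1 : ∑ j, β j = (∑ j, β' j) + ∑ j, (if j = i then 1 else 0) := by
        conv_lhs => rw [hββ']
        rw [← Finset.sum_add_distrib]
      rw [Finset.sum_ite_eq' univ i (fun _ => 1), if_pos (mem_univ i)] at h1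
      omega
    rw [hββ', Smon_step]
    exact ih β' hsum' mm' _ (theta_mem_pow _ i mm' f hf) (by omega)

theorem Sq_vanish (mm : ℕ) (f : MvPolynomial (Fin N) k)
    (hf : f ∈ pointIdeal k N (fun _ => 1) ^ mm) (q : MvPolynomial (Fin N) k)
    (hq : q.totalDegree < mm) :
    ∑ b ∈ f.support, coeff b f * eval (fun j => (b j : k)) q = 0 := by
  have hexp : ∀ b : Fin N →₀ ℕ, eval (fun j => (b j : k)) q
      = ∑ β ∈ q.support, coeff β q * ∏ j, (b j : k) ^ β j := by
    intro b
    rw [eval_eq]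
    apply Finset.sum_congr rfl
    intro β _
    congr 1
    exact Finset.prod_subset (Finset.subset_univ β.support) (fun j _ hj => by
      rw [Finsupp.notMem_support_iff.mp hj, pow_zero])
  rw [Finset.sum_congr rfl (fun b _ => by rw [hexp b])]
  rw [Finset.sum_congr rfl (fun b (_ : b ∈ f.support) => Finset.mul_sum _ _ _)]
  rw [Finset.sum_comm]
  apply Finset.sum_eq_zero
  intro β hβ
  have hswap : ∑ b ∈ f.support, coeff b f * (coeff β q * ∏ j, (b j:k)^β j)
      = coeff β q * Smon (fun j => β j) f := by
    rw [Smon, Finset.mul_sum]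
    exact Finset.sum_congr rfl (fun b _ => by ring)
  rw [hswap, Smon_vanish (∑ j, β j) _ rfl mm f hf ?_, mul_zero]
  have h1 := MvPolynomial.le_totalDegree hβ
  have h2 : (β.sum fun _ e => e) = ∑ j, β j := Finsupp.sum_fintype _ _ (fun _ => rfl)
  omega

theorem td_bind₁ (σf : Fin N → MvPolynomial (Fin N) k)
    (hσ : ∀ i, (σf i).totalDegree ≤ 1) (q : MvPolynomial (Fin N) k) :
    (bind₁ σf q).totalDegree ≤ q.totalDegree := by
  conv_lhs => rw [q.as_sum]
  rw [map_sum]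
  refine le_trans (totalDegree_finset_sum _ _) ?_
  refine Finset.sup_le (fun β hβ => ?_)
  rw [bind₁_monomial]
  refine le_trans (totalDegree_mul _ _) ?_
  rw [totalDegree_C, zero_add]
  refine le_trans (totalDegree_finset_prod _ _) ?_
  have hterm : ∀ i ∈ β.support, ((σf i) ^ (β i)).totalDegree ≤ β i := by
    intro i _
    refine le_trans (totalDegree_pow _ _) ?_
    have := hσ i
    calc β i * (σf i).totalDegree ≤ β i * 1 := Nat.mul_le_mul_left _ this
    _ = β i := Nat.mul_one _
  refine le_trans (Finset.sum_le_sum hterm) ?_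
  have h2 : ∑ i ∈ β.support, β i = (β.sum fun _ e => e) := rfl
  rw [h2]
  exact MvPolynomial.le_totalDegree hβ

theorem castDF (a t : ℕ) : (∏ r ∈ range t, ((a:k) - (r:k))) = ((a.descFactorial t : ℕ) : k) := by
  induction t with
  | zero => simp
  | succ t ih =>
    rw [Finset.prod_range_succ, ih, Nat.descFactorial_succ]
    by_cases h : t ≤ a
    · rw [Nat.cast_mul, Nat.cast_sub h]
      ring
    · have h1 : a < t := by omega
      have h2 : a.descFactorial t = 0 := Nat.descFactorial_eq_zero_iff_lt.mpr h1
      rw [h2]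
      simp

theorem caseB [CharZero k] (d mτ : ℕ) (c : Fin N → ℕ) (F : MvPolynomial (Fin N) k)
    (hdeg : ∀ b : Fin N →₀ ℕ, coeff b F ≠ 0 → ∑ j, b j = d)
    (hbox : ∀ b : Fin N →₀ ℕ, coeff b F ≠ 0 → ∀ j, b j ≤ c j)
    (hsum : (∑ j, c j) + 1 = d + mτ)
    (hmult : F ∈ pointIdeal k N (fun _ => 1) ^ mτ) : F = 0 := by
  rcases Nat.eq_zero_or_pos mτ with h0 | hpos
  · subst h0
    ext b
    rw [coeff_zero]
    by_contra hb
    have h1 := hdeg b hb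
    have h2 : ∑ j, b j ≤ ∑ j, c j := Finset.sum_le_sum (fun j _ => hbox b hb j)
    omega
  · ext b0
    rw [coeff_zero]
    by_contra hb0
    have hb0box := hbox b0 hb0
    have hb0deg := hdeg b0 hb0
    set a0 : Fin N → ℕ := fun j => c j - b0 j with ha0
    have ha0sum : (∑ j, a0 j) + d = ∑ j, c j := by
      have key : ∀ j, a0 j + b0 j = c j := by
        intro j
        show c j - b0 j + b0 j = c j
        have := hb0box j
        omega
      have h1 : ∑ j, (a0 j + b0 j) = ∑ j, c j := Finset.sum_congr rfl (fun j _ => key j)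
      rw [Finset.sum_add_distrib] at h1
      omega
    set q : MvPolynomial (Fin N) k := ∏ j, ∏ r ∈ range (a0 j), (X j - C (r : k)) with hq
    have hqdeg : q.totalDegree < mτ := by
      have h1 : q.totalDegree ≤ ∑ j, a0 j := by
        refine le_trans (totalDegree_finset_prod _ _) ?_
        refine Finset.sum_le_sum (fun j _ => ?_)
        refine le_trans (totalDegree_finset_prod _ _) ?_
        have h2 : ∀ r ∈ range (a0 j), (X j - C (r:k)).totalDegree ≤ 1 := by
          intro r _
          rw [sub_eq_add_neg, ← map_neg]
          refine le_trans (totalDegree_add _ _) ?_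
          rw [totalDegree_C]
          refine max_le (totalDegree_X _).le (by omega)
        refine le_trans (Finset.sum_le_sum h2) ?_
        rw [Finset.sum_const, smul_eq_mul, mul_one, Finset.card_range]
      omega
    set σf : Fin N → MvPolynomial (Fin N) k := fun j => C (c j : k) - X j with hσf
    have hσdeg : ∀ i, (σf i).totalDegree ≤ 1 := by
      intro i
      show (C (c i : k) - X i).totalDegree ≤ 1
      rw [sub_eq_add_neg]
      refine le_trans (totalDegree_add _ _) ?_
      rw [totalDegree_C, totalDegree_neg]
      exact max_le (by omega) (totalDegree_X _).le
    have hvan := Sq_vanish mτ F hmult (bind₁ σf q)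
      (lt_of_le_of_lt (td_bind₁ σf hσdeg q) hqdeg)
    have hrw : ∀ b : Fin N →₀ ℕ, b ∈ F.support →
        eval (fun j => (b j : k)) (bind₁ σf q)
          = ∏ j, (((c j - b j).descFactorial (a0 j) : ℕ) : k) := by
      intro b hb
      have hbox' := hbox b (mem_support_iff.mp hb)
      have h1 : eval (fun j => (b j : k)) (bind₁ σf q)
          = eval (fun j => ((c j - b j : ℕ) : k)) q := by
        have h2 : eval (fun j => (b j : k)) (bind₁ σf q)
            = aeval (fun i => aeval (fun j => (b j : k)) (σf i)) q :=
          aeval_bind₁ _ _ _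
        rw [h2]
        show eval (fun i => eval (fun j => (b j : k)) (σf i)) q = _
        have hfun : (fun i => eval (fun j => (b j : k)) (σf i))
            = fun i => ((c i - b i : ℕ) : k) := by
          funext i
          show eval (fun j => (b j : k)) (C (c i : k) - X i) = _
          rw [map_sub, eval_C, eval_X, Nat.cast_sub (hbox' i)]
        rw [hfun]
      rw [h1, hq]
      rw [map_prod]
      refine Finset.prod_congr rfl (fun j _ => ?_)
      rw [map_prod]
      have h3 : ∀ r ∈ range (a0 j),
          eval (fun l => ((c l - b l : ℕ) : k)) (X j - C (r:k))
            = ((c j - b j : ℕ) : k) - (r : k) := by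
        intro r _
        rw [map_sub, eval_C, eval_X]
      rw [Finset.prod_congr rfl h3, castDF]
    have hrw2 : ∀ b ∈ F.support,
        coeff b F * eval (fun j => (b j : k)) (bind₁ σf q)
          = coeff b F * ∏ j, (((c j - b j).descFactorial (a0 j) : ℕ) : k) :=
      fun b hb => by rw [hrw b hb]
    rw [Finset.sum_congr rfl hrw2] at hvan
    have hsngl : ∑ b ∈ F.support, coeff b F * ∏ j, (((c j - b j).descFactorial (a0 j) : ℕ) : k)
        = coeff b0 F * ∏ j, (((a0 j).factorial : ℕ) : k) := by
      rw [Finset.sum_eq_single_of_mem b0 (mem_support_iff.mpr hb0)]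
      · congr 1
        refine Finset.prod_congr rfl (fun j _ => ?_)
        have : c j - b0 j = a0 j := rfl
        rw [this, Nat.descFactorial_self]
      · intro b hb hne
        have hboxb := hbox b (mem_support_iff.mp hb)
        have hdegb := hdeg b (mem_support_iff.mp hb)
        have hzero : ∏ j, (((c j - b j).descFactorial (a0 j) : ℕ) : k) = 0 := by
          by_contra hc
          have hc2 := Finset.prod_ne_zero_iff.mp hc
          have hle : ∀ j : Fin N, a0 j ≤ c j - b j := by
            intro j
            have := hc2 j (mem_univ j)
            rw [Nat.cast_ne_zero] at this
            have := Nat.descFactorial_eq_zero_iff_lt.not.mp this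
            omega
          have hsb : (∑ j, (c j - b j)) + d = ∑ j, c j := by
            have key : ∀ j, (c j - b j) + b j = c j := by
              intro j; have := hboxb j; omega
            have h1 : ∑ j, ((c j - b j) + b j) = ∑ j, c j :=
              Finset.sum_congr rfl (fun j _ => key j)
            rw [Finset.sum_add_distrib] at h1
            omega
          have heqsum : ∑ j, a0 j = ∑ j, (c j - b j) := by omega
          have heq : ∀ j ∈ univ, a0 j = c j - b j :=
            (Finset.sum_eq_sum_iff_of_le (fun j _ => hle j)).mp heqsum
          apply hne
          apply Finsupp.ext
          intro j
          have h4 := heq j (mem_univ j)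
          have h5 := hb0box j
          have h6 := hboxb j
          have h7 : a0 j = c j - b0 j := rfl
          omega
        rw [hzero, mul_zero]
    rw [hsngl] at hvan
    have hfac : ∏ j, (((a0 j).factorial : ℕ) : k) ≠ 0 := by
      rw [Finset.prod_ne_zero_iff]
      intro j _
      exact Nat.cast_ne_zero.mpr (Nat.factorial_ne_zero _)
    exact hb0 (by
      rcases mul_eq_zero.mp hvan with h | h
      · exact h
      · exact absurd h hfac)

/-- for these `n+2` points with `m_i ≤ d+1`, and either `b = 1`, or
`b ≤ 0` with some `m_j = d+1`, the linear system is zero and `ldim = 0`. -/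
theorem stmt1 (k : Type) [Field k] [IsAlgClosed k] [CharZero k]
    (n d : ℕ) (hn : 2 ≤ n) (hd : 1 ≤ d) (m : ℕ → ℕ)
    (hm : ∀ i < n + 2, m i ≤ d + 1)
    (hb : ((∑ i ∈ Finset.range (n + 2), (m i : ℤ)) - (n : ℤ) * d = 1) ∨
      (((∑ i ∈ Finset.range (n + 2), (m i : ℤ)) - (n : ℤ) * d ≤ 0) ∧
        ∃ j < n + 2, m j = d + 1)) :
    linSys k n d (n + 2) m (genCfg k n) = ⊥ ∧ ldim n d (n + 2) m = 0 := by
  constructor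
  · -- the linear system is zero
    rw [eq_bot_iff]
    intro F hF
    rw [Submodule.mem_bot]
    rw [linSys, Submodule.mem_inf] at hF
    obtain ⟨hhom, hinf⟩ := hF
    simp only [Submodule.mem_iInf, Submodule.restrictScalars_mem, Finset.mem_range] at hinf
    have hhom' := (mem_homogeneousSubmodule d F).mp hhom
    by_cases hex : ∃ j, j < n + 2 ∧ m j = d + 1
    · obtain ⟨j, hj, hjval⟩ := hex
      have hFj := hinf j hj
      rw [hjval] at hFj
      exact homog_zero_of_mem_pow (genCfg k n j) d F hhom' hFj
    · push_neg at hex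
      have hmled : ∀ i < n + 2, m i ≤ d := by
        intro i hi
        have h1 := hm i hi
        have h2 := hex i hi
        omega
      have hb1 : (∑ i ∈ Finset.range (n+2), (m i : ℤ)) - (n:ℤ) * d = 1 := by
        rcases hb with h | ⟨_, j, hj1, hj2⟩
        · exact h
        · exact absurd hj2 (by have := hmled j hj1; omega)
      have hdeg : ∀ b : Fin (n+1) →₀ ℕ, coeff b F ≠ 0 → ∑ j, b j = d :=
        fun b hb => sum_eq_of_isHomogeneous hhom' hb
      have hbox : ∀ b : Fin (n+1) →₀ ℕ, coeff b F ≠ 0 → ∀ j : Fin (n+1), b j ≤ d - m ↑j := by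
        intro b hb j
        have hmemj := hinf ↑j (by have := j.isLt; omega)
        have hgen : genCfg k n ↑j = (fun l => if l = j then (1:k) else 0) := by
          funext l
          rw [genCfg]
          have hne : (↑j : ℕ) ≠ n + 1 := by have := j.isLt; omega
          rw [if_neg hne]
          by_cases h : l = j
          · rw [if_pos (by rw [h]), if_pos h]
          · rw [if_neg (fun hc => h (Fin.val_injective hc)), if_neg h]
        rw [hgen] at hmemj
        have hW := pointIdeal_coord_weight j (m ↑j) F hmemj b hb
        have hsplit : ∑ l, b l = (∑ l, (if l = j then 0 else b l)) + b j := by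
          have hpt : ∀ l : Fin (n+1), b l
              = (if l = j then 0 else b l) + (if l = j then b l else 0) := by
            intro l; split <;> omega
          rw [Finset.sum_congr rfl (fun l _ => hpt l), Finset.sum_add_distrib,
            Finset.sum_ite_eq' univ j (fun l => b l), if_pos (mem_univ j)]
        have hd2 := hdeg b hb
        omega
      have hu : genCfg k n (n+1) = (fun _ => (1:k)) := by
        funext l; rw [genCfg, if_pos rfl]
      have hmult := hinf (n+1) (by omega)
      rw [hu] at hmult
      have hmd : ∀ j : Fin (n+1), m ↑j ≤ d := by
        intro j; exact hmled ↑j (by have := j.isLt; omega)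
      have hsum : (∑ j : Fin (n+1), (d - m ↑j)) + 1 = d + m (n+1) := by
        have hZ : (∑ i : Fin (n+1), ((d - m ↑i : ℕ) : ℤ)) = (d:ℤ) + m (n+1) - 1 := by
          have hc : ∀ i : Fin (n+1), ((d - m ↑i : ℕ) : ℤ) = (d:ℤ) - (m ↑i : ℤ) := by
            intro i; have := hmd i; omega
          rw [Finset.sum_congr rfl (fun i _ => hc i), Finset.sum_sub_distrib,
            Finset.sum_const, Finset.card_univ, Fintype.card_fin, nsmul_eq_mul]
          have hfin : ∑ i : Fin (n+1), (m ↑i : ℤ) = ∑ i ∈ Finset.range (n+1), (m i : ℤ) :=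
            Fin.sum_univ_eq_sum_range (fun i => (m i : ℤ)) (n+1)
          rw [hfin]
          rw [Finset.sum_range_succ] at hb1
          push_cast at hb1 ⊢
          linarith
        have hZZ : ((∑ i : Fin (n+1), (d - m ↑i) : ℕ) : ℤ) = (d:ℤ) + m (n+1) - 1 := by
          rw [Nat.cast_sum]; exact hZ
        omega
      exact caseB d (m (n+1)) (fun j => d - m ↑j) F hdeg hbox hsum hmult
  · exact partii n d hn hd m hm hb

end
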